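/- For all n, n' ∈ ℕ₊ and every ReLU layer function h ∈ RL(n, n'), the number of attained signatures satisfies |𝒮_h| ≤ Σ_{j=0}^{n} C(n', j), where C(n', j) denotes the binomial coefficient. -/

import Mathlib

open Matrix

/-- A ReLU layer function with weight matrix `W` and bias `b`:
`h(x)_i = max(0, ⟨x, w_i⟩ + b_i)` where `w_i` is the `i`-th row of `W`. -/
noncomputable def relu {n n' : ℕ} (W : Matrix (Fin n') (Fin n) ℝ) (b : Fin n' → ℝ)
    (x : Fin n → ℝ) : Fin n' → ℝ :=
  fun i => max 0 (W i ⬝ᵥ x + b i)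

/-- The signature of `x`: its `i`-th entry is `true` iff `⟨x, w_i⟩ + b_i > 0`. -/
noncomputable def sig {n n' : ℕ} (W : Matrix (Fin n') (Fin n) ℝ) (b : Fin n' → ℝ)
    (x : Fin n → ℝ) : Fin n' → Bool :=
  fun i => decide (0 < W i ⬝ᵥ x + b i)

lemma key_sign {n n' : ℕ} (W : Matrix (Fin n') (Fin n) ℝ) (b : Fin n' → ℝ)
    (s : Finset (Fin n')) (c : Fin n' → ℝ) (c0 : ℝ)
    (hrel : ∀ t ⊆ s, ∃ x : Fin n → ℝ, ∀ i ∈ s, (i ∈ t ↔ 0 < W i ⬝ᵥ x + b i))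
    (hsum : ∀ x : Fin n → ℝ, ∑ i ∈ s, c i * (W i ⬝ᵥ x + b i) = -c0)
    (hc0 : 0 ≤ c0) (hpos : 0 < c0 ∨ ∃ i ∈ s, 0 < c i) : False := by
  classical
  obtain ⟨x, hx⟩ := hrel (s.filter (fun i => 0 < c i)) (Finset.filter_subset _ _)
  have hterm : ∀ i ∈ s, 0 ≤ c i * (W i ⬝ᵥ x + b i) := by
    intro i hi
    by_cases h : 0 < c i
    · have : 0 < W i ⬝ᵥ x + b i := (hx i hi).1 (Finset.mem_filter.2 ⟨hi, h⟩)
      positivity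
    · push_neg at h
      have hnot : ¬ (0 < W i ⬝ᵥ x + b i) := fun hf =>
        (by simpa [not_lt.2 h] using Finset.mem_filter.1 ((hx i hi).2 hf) |>.2)
      push_neg at hnot
      nlinarith
  have hge : (0 : ℝ) ≤ ∑ i ∈ s, c i * (W i ⬝ᵥ x + b i) := Finset.sum_nonneg hterm
  rcases hpos with h0 | ⟨i, hi, hci⟩
  · have := hsum x; linarith
  · have hlt : (0 : ℝ) < ∑ i ∈ s, c i * (W i ⬝ᵥ x + b i) := by
      refine Finset.sum_pos' hterm ⟨i, hi, ?_⟩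
      have : 0 < W i ⬝ᵥ x + b i := (hx i hi).1 (Finset.mem_filter.2 ⟨hi, hci⟩)
      positivity
    have := hsum x; linarith

/-- No set of `n+1` indices can be shattered by the signature patterns. -/
lemma no_shatter {n n' : ℕ} (W : Matrix (Fin n') (Fin n) ℝ) (b : Fin n' → ℝ)
    (s : Finset (Fin n')) (hcard : s.card = n + 1)
    (hrel : ∀ t ⊆ s, ∃ x : Fin n → ℝ, ∀ i ∈ s, (i ∈ t ↔ 0 < W i ⬝ᵥ x + b i)) : False := by
  classical
  have hfr : Module.finrank ℝ ((Fin n → ℝ) × ℝ) = n + 1 := by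
    simp [Module.finrank_prod]
  set u : Option {i // i ∈ s} → (Fin n → ℝ) × ℝ :=
    fun j => match j with
      | none => ((0 : Fin n → ℝ), (1 : ℝ))
      | some i => (W i.1, b i.1) with hu
  have hnli : ¬ LinearIndependent ℝ u := by
    intro h
    have := h.fintype_card_le_finrank
    rw [hfr, Fintype.card_option, Fintype.card_coe, hcard] at this
    omega
  obtain ⟨g, hg0, j0, hj0⟩ := Fintype.not_linearIndependent_iff.1 hnli
  set c : Fin n' → ℝ := fun i => if h : i ∈ s then g (some ⟨i, h⟩) else 0 with hc
  have hkey : ∀ x : Fin n → ℝ, ∑ i ∈ s, c i * (W i ⬝ᵥ x + b i) = -(g none) := by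
    intro x
    set L : ((Fin n → ℝ) × ℝ) →ₗ[ℝ] ℝ :=
      { toFun := fun p => p.1 ⬝ᵥ x + p.2
        map_add' := by intro p q; simp [add_dotProduct]; ring
        map_smul' := by intro r p; simp [smul_dotProduct]; ring } with hL
    have h1 : ∑ j : Option {i // i ∈ s}, g j * L (u j) = 0 := by
      have := congrArg L hg0
      rw [map_sum, map_zero] at this
      simpa [smul_eq_mul] using this
    rw [Fintype.sum_option] at h1
    have h2 : ∑ i : {i // i ∈ s}, g (some i) * L (u (some i))
        = ∑ i ∈ s, c i * (W i ⬝ᵥ x + b i) := by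
      rw [← Finset.sum_attach s (fun i => c i * (W i ⬝ᵥ x + b i))]
      refine Finset.sum_congr rfl (fun i _ => ?_)
      simp [hc, i.2, hu, hL]
    have h3 : L (u none) = 1 := by simp [hu, hL]
    rw [h2, h3] at h1
    linarith
  have hcmem : ∀ (i : {j // j ∈ s}), c i.1 = g (some i) := by
    intro i; simp [hc, i.2]
  rcases lt_trichotomy (g none) 0 with h | h | h
  · refine key_sign W b s (fun i => -c i) (-(g none)) hrel (fun x => ?_) (by linarith)
      (Or.inl (by linarith))
    simp only [neg_mul]
    rw [Finset.sum_neg_distrib, hkey x]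
  · -- g none = 0; some coefficient on s is nonzero
    match j0 with
    | none => exact hj0 h
    | some i0 =>
      rcases lt_or_gt_of_ne hj0 with hneg | hposi
      · refine key_sign W b s (fun i => -c i) (-(g none)) hrel (fun x => ?_) (by linarith)
          (Or.inr ⟨i0.1, i0.2, by show 0 < -c i0.1; rw [hcmem i0]; linarith⟩)
        simp only [neg_mul]
        rw [Finset.sum_neg_distrib, hkey x]
      · exact key_sign W b s c (g none) hrel hkey (by linarith)
          (Or.inr ⟨i0.1, i0.2, by rw [hcmem i0]; exact hposi⟩)
  · exact key_sign W b s c (g none) hrel hkey (by linarith) (Or.inl h)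

theorem stmt0 (n n' : ℕ) (hn : 0 < n) (hn' : 0 < n')
    (W : Matrix (Fin n') (Fin n) ℝ) (b : Fin n' → ℝ) :
    (Set.range (sig W b)).ncard ≤ ∑ j ∈ Finset.range (n + 1), n'.choose j := by
  classical
  set F : (Fin n' → Bool) → Finset (Fin n') :=
    fun f => Finset.univ.filter (fun i => f i = true) with hF
  have hFinj : Function.Injective F := by
    intro f g h
    funext i
    have := Finset.ext_iff.1 h i
    simp only [hF, Finset.mem_filter, Finset.mem_univ, true_and] at this
    cases hf : f i <;> cases hg : g i <;> simp_all
  have hfin : (Set.range (sig W b)).Finite := Set.toFinite _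
  set 𝒜 : Finset (Finset (Fin n')) := hfin.toFinset.image F with hA
  have hcard : (Set.range (sig W b)).ncard = 𝒜.card := by
    rw [Set.ncard_eq_toFinset_card _ hfin, hA, Finset.card_image_of_injective _ hFinj]
  have hvc : 𝒜.vcDim ≤ n := by
    apply Finset.sup_le
    intro s hs
    rw [Finset.mem_shatterer] at hs
    by_contra hlt
    push_neg at hlt
    obtain ⟨t, hts, htc⟩ := Finset.exists_subset_card_eq (show n + 1 ≤ s.card from hlt)
    have hsh := hs.mono_right hts
    refine no_shatter W b t htc (fun t' ht' => ?_)
    obtain ⟨v, hvA, hint⟩ := hsh ht'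
    rw [hA, Finset.mem_image] at hvA
    obtain ⟨w, hw, rfl⟩ := hvA
    rw [Set.Finite.mem_toFinset] at hw
    obtain ⟨x, rfl⟩ := hw
    refine ⟨x, fun i hi => ?_⟩
    rw [← hint]
    simp [hF, Finset.mem_filter, hi, sig]
  rw [hcard]
  calc 𝒜.card ≤ 𝒜.shatterer.card := Finset.card_le_card_shatterer 𝒜
    _ ≤ ∑ k ∈ Finset.Iic 𝒜.vcDim, (Fintype.card (Fin n')).choose k :=
        Finset.card_shatterer_le_sum_vcDim
    _ ≤ ∑ j ∈ Finset.range (n + 1), n'.choose j := by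
        simp only [Fintype.card_fin]
        refine Finset.sum_le_sum_of_subset (fun k hk => ?_)
        rw [Finset.mem_Iic] at hk
        rw [Finset.mem_range]
        omega
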